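/- Let E[υ_n] = ∑_{k=1}^{n-1} π_{k,n}·2(H_k − 1) with π_{k,n} = 2(n+1)/((n−1)(k+2)(k+1)). Then E[υ_n] = (4/(n−1))(n − H_n) − 2, and this converges to 2 as n → ∞. -/

import Mathlib

noncomputable def H (n : ℕ) : ℝ := ∑ i ∈ Finset.range n, (1 : ℝ) / (i + 1)

noncomputable def piKN (k n : ℕ) : ℝ :=
  2 * ((n : ℝ) + 1) / (((n : ℝ) - 1) * (k + 2) * (k + 1))

lemma H_succ (n : ℕ) : H (n + 1) = H n + 1 / (n + 1) := by
  simp [H, Finset.sum_range_succ]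

lemma H_eq_harmonic (n : ℕ) : H n = (harmonic n : ℝ) := by
  simp [H, harmonic, one_div]

lemma H_nonneg (n : ℕ) : 0 ≤ H n := by
  apply Finset.sum_nonneg; intro i _; positivity

lemma key_sum (n : ℕ) :
    ∑ k ∈ Finset.Icc 1 n, (H k - 1) / (((k : ℝ) + 2) * ((k : ℝ) + 1))
      = 1 / 2 - H (n + 1) / ((n : ℝ) + 2) := by
  induction n with
  | zero => simp [H]
  | succ m ih =>
      rw [Finset.sum_Icc_succ_top (by norm_num), ih, H_succ (m + 1), H_succ m]
      have h1 : ((m : ℝ) + 1) ≠ 0 := by positivity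
      have h2 : ((m : ℝ) + 2) ≠ 0 := by positivity
      have h3 : ((m : ℝ) + 3) ≠ 0 := by positivity
      push_cast
      field_simp
      ring

theorem expectation_upsilon :
    (∀ n : ℕ, 2 ≤ n →
      ∑ k ∈ Finset.Icc 1 (n - 1), piKN k n * (2 * (H k - 1))
        = (4 / ((n : ℝ) - 1)) * ((n : ℝ) - H n) - 2) ∧
    Filter.Tendsto (fun n : ℕ => (4 / ((n : ℝ) - 1)) * ((n : ℝ) - H n) - 2)
      Filter.atTop (nhds 2) := by
  constructor
  · intro n hn
    obtain ⟨m, rfl⟩ : ∃ m, n = m + 2 := ⟨n - 2, by omega⟩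
    have hsum := key_sum (m + 1)
    have h0 : ((m : ℝ) + 2) - 1 ≠ 0 := by push_cast; intro h; nlinarith [Nat.cast_nonneg (α := ℝ) m]
    have h1 : ((m : ℝ) + 2) + 1 ≠ 0 := by positivity
    have heq : ∀ k ∈ Finset.Icc 1 (m + 2 - 1),
        piKN k (m + 2) * (2 * (H k - 1))
          = (4 * (((m : ℝ) + 2) + 1) / (((m : ℝ) + 2) - 1)) *
              ((H k - 1) / (((k : ℝ) + 2) * ((k : ℝ) + 1))) := by
      intro k hk
      have hk2 : ((k : ℝ) + 2) ≠ 0 := by positivity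
      have hk1 : ((k : ℝ) + 1) ≠ 0 := by positivity
      simp only [piKN]
      push_cast
      field_simp
      ring
    rw [Finset.sum_congr rfl heq, ← Finset.mul_sum]
    have : (m + 2 - 1) = m + 1 := by omega
    rw [this, hsum]
    have hHe : H (m + 1 + 1) = H (m + 2) := by norm_num
    rw [hHe]
    have hA : ((m : ℝ) + 1) ≠ 0 := by positivity
    have hB : ((m : ℝ) + 3) ≠ 0 := by positivity
    push_cast
    field_simp
    ring
  · have hmain : Filter.Tendsto (fun n : ℕ => (4 / ((n : ℝ) - 1)) * ((n : ℝ) - H n))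
        Filter.atTop (nhds 4) := by
      have hrewrite : ∀ᶠ n : ℕ in Filter.atTop,
          (4 / ((n : ℝ) - 1)) * ((n : ℝ) - H n)
            = 4 * (1 + (1 - H n) / ((n : ℝ) - 1)) := by
        filter_upwards [Filter.eventually_ge_atTop 2] with n hn
        have h0 : ((n : ℝ) - 1) ≠ 0 := by
          have : (2 : ℝ) ≤ n := by exact_mod_cast hn
          intro h; linarith
        field_simp
        try ring
      rw [Filter.tendsto_congr' hrewrite]
      have hg : Filter.Tendsto (fun x : ℝ => (2 + Real.log x) / (x - 1))
          Filter.atTop (nhds 0) := by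
        apply Asymptotics.IsLittleO.tendsto_div_nhds_zero
        have h1 : (fun x : ℝ => 2 + Real.log x) =o[Filter.atTop] (fun x : ℝ => x) := by
          apply Asymptotics.IsLittleO.add
          · exact Asymptotics.isLittleO_const_id_atTop (2 : ℝ)
          · exact Real.isLittleO_log_id_atTop
        refine h1.trans_isBigO ?_
        rw [Asymptotics.isBigO_iff]
        refine ⟨2, ?_⟩
        filter_upwards [Filter.eventually_ge_atTop (2 : ℝ)] with x hx
        rw [Real.norm_eq_abs, Real.norm_eq_abs, abs_of_nonneg (by linarith),
          abs_of_nonneg (by linarith)]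
        linarith
      have hz : Filter.Tendsto (fun n : ℕ => (1 - H n) / ((n : ℝ) - 1))
          Filter.atTop (nhds 0) := by
        refine squeeze_zero_norm' ?_ (hg.comp tendsto_natCast_atTop_atTop)
        filter_upwards [Filter.eventually_ge_atTop 3] with n hn
        have hn3 : (3 : ℝ) ≤ n := by exact_mod_cast hn
        have hpos : (0 : ℝ) < (n : ℝ) - 1 := by linarith
        have hH : H n ≤ 1 + Real.log n := by
          rw [H_eq_harmonic]; exact_mod_cast harmonic_le_one_add_log n
        have hlogpos : 0 ≤ Real.log n := Real.log_nonneg (by linarith)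
        have hHpos := H_nonneg n
        show ‖(1 - H n) / ((n : ℝ) - 1)‖ ≤ (2 + Real.log n) / ((n : ℝ) - 1)
        rw [norm_div, Real.norm_eq_abs, Real.norm_eq_abs, abs_of_pos hpos]
        gcongr
        rw [abs_sub_comm, abs_sub_le_iff]
        constructor <;> linarith
      have h4 := ((hz.const_add 1).const_mul (4 : ℝ))
      norm_num at h4
      convert h4 using 2 with n
      try ring
    have h2 := hmain.sub_const 2
    norm_num at h2
    exact h2
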